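/- Let D be a finite digraph and let u, s, t, v be vertices. Suppose s two-reaches v and t two-reaches v, and suppose there exist a directed path from u to s and a directed path from u to t that are arc-disjoint. Then u two-reaches v. -/

import Mathlib

/-- An orientation of an undirected simple graph `G`: each edge is assigned
exactly one direction, giving the arc relation `arc`. -/
structure GraphOrientation {V : Type*} (G : SimpleGraph V) where
  arc : V → V → Prop
  adj_iff : ∀ u v, G.Adj u v ↔ (arc u v ∨ arc v u)
  asymm : ∀ u v, arc u v → ¬ arc v u

/-- The indegree of a vertex in an orientation. -/
noncomputable def indeg {V : Type*} {G : SimpleGraph V} (D : GraphOrientation G) (v : V) : ℕ :=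
  {u | D.arc u v}.ncard

/-- The list of consecutive arcs of a path given as a list of vertices. -/
def pathArcs {V : Type*} (p : List V) : List (V × V) := p.zip p.tail

/-- The list of arcs of a cycle given as a list of (distinct) vertices,
including the closing arc from the last vertex back to the first. -/
def cycleArcs {V : Type*} (p : List V) : List (V × V) := p.zip (p.rotate 1)

/-- `p` is a (simple) directed path from `u` to `v` with respect to the arc relation `A`. -/
def IsDipath {V : Type*} (A : V → V → Prop) (p : List V) (u v : V) : Prop :=
  p.head? = some u ∧ p.getLast? = some v ∧ p.Nodup ∧ p.Chain' A

/-- `D'` is obtained from `D` by reversing exactly the arcs in the list `A`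
(all of which must be arcs of `D`). -/
def ReversalAlong {V : Type*} {G : SimpleGraph V} (D D' : GraphOrientation G)
    (A : List (V × V)) : Prop :=
  (∀ a ∈ A, D.arc a.1 a.2) ∧ ∀ u v, D'.arc u v ↔ ((D.arc u v ∧ (u, v) ∉ A) ∨ (v, u) ∈ A)

/-- `D'` is obtained from `D` by reversing every arc of some directed cycle. -/
def CycleReversal {V : Type*} {G : SimpleGraph V} (D D' : GraphOrientation G) : Prop :=
  ∃ p : List V, p ≠ [] ∧ p.Nodup ∧ ReversalAlong D D' (cycleArcs p)

/-- `D'` is obtained from `D` by a weak reversal: reversing a directed path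
from `u` to `v` where `δ(u) = δ(v) - 1`. -/
def WeakReversal {V : Type*} {G : SimpleGraph V} (D D' : GraphOrientation G) : Prop :=
  ∃ (p : List V) (u v : V), IsDipath D.arc p u v ∧ indeg D u + 1 = indeg D v ∧
    ReversalAlong D D' (pathArcs p)

/-- `D` contains no reversible path, i.e. no directed path from `u` to `v`
with `δ(u) < δ(v) - 1`. -/
def NoReversiblePath {V : Type*} {G : SimpleGraph V} (D : GraphOrientation G) : Prop :=
  ∀ u v : V, Relation.ReflTransGen D.arc u v → indeg D v ≤ indeg D u + 1

/-- The indegree sequence of an orientation, sorted in decreasing order. -/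
noncomputable def degSeq {V : Type*} [Fintype V] {G : SimpleGraph V}
    (D : GraphOrientation G) : List ℕ :=
  ((Finset.univ.val.map (indeg D)).sort (· ≤ ·)).reverse

/-- Lexicographic (non-strict) comparison of lists of naturals. -/
def lexLE (l₁ l₂ : List ℕ) : Prop := l₁ = l₂ ∨ List.Lex (· < ·) l₁ l₂

/-- `u` two-reaches `v`: there are two arc-disjoint directed paths from `u` to `v`. -/
def TwoReaches {V : Type*} (A : V → V → Prop) (u v : V) : Prop :=
  ∃ p q : List V, IsDipath A p u v ∧ IsDipath A q u v ∧ ∀ a ∈ pathArcs p, a ∉ pathArcs q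

/-- Reachability inside the induced subgraph `G[U]`. -/
def ReachIn {V : Type*} (G : SimpleGraph V) (U : Set V) (x y : V) : Prop :=
  Relation.ReflTransGen (fun a b => a ∈ U ∧ b ∈ U ∧ G.Adj a b) x y

/-- `C` is a connected component of the induced undirected subgraph `G[U]`. -/
def IsCompOf {V : Type*} (G : SimpleGraph V) (U C : Set V) : Prop :=
  ∃ x ∈ U, C = {y | ReachIn G U x y}

namespace Aux
variable {V : Type*}

theorem pathArcs_nil : pathArcs ([] : List V) = [] := rfl
theorem pathArcs_single (x : V) : pathArcs [x] = [] := rfl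
theorem pathArcs_cons (x z : V) (l : List V) :
    pathArcs (x :: z :: l) = (x, z) :: pathArcs (z :: l) := rfl

theorem pathArcs_cons' (x : V) {p : List V} {z : V} (h : p.head? = some z) :
    pathArcs (x :: p) = (x, z) :: pathArcs p := by
  cases p with
  | nil => simp at h
  | cons b l => simp at h; subst h; rfl

theorem arc_rel {A : V → V → Prop} : ∀ {p : List V}, p.Chain' A →
    ∀ a ∈ pathArcs p, A a.1 a.2 := by
  intro p
  induction p with
  | nil => intro _ a ha; simp [pathArcs_nil] at ha
  | cons x l ih =>
    intro hc a ha
    cases l with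
    | nil => simp [pathArcs_single] at ha
    | cons z l' =>
      rw [pathArcs_cons] at ha
      rcases List.mem_cons.1 ha with h | h
      · subst h; exact (List.isChain_cons_cons.1 hc).1
      · exact ih (List.isChain_cons_cons.1 hc).2 a h

theorem mem_of_mem_pathArcs : ∀ {p : List V} {a : V × V}, a ∈ pathArcs p →
    a.1 ∈ p ∧ a.2 ∈ p := by
  intro p
  induction p with
  | nil => intro a ha; simp [pathArcs_nil] at ha
  | cons x l ih =>
    intro a ha
    cases l with
    | nil => simp [pathArcs_single] at ha
    | cons z l' =>
      rw [pathArcs_cons] at ha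
      rcases List.mem_cons.1 ha with h | h
      · subst h; constructor <;> simp
      · obtain ⟨h1, h2⟩ := ih h
        exact ⟨List.mem_cons_of_mem _ h1, List.mem_cons_of_mem _ h2⟩

theorem pathArcs_nodup {p : List V} (h : p.Nodup) : (pathArcs p).Nodup := by
  have : (pathArcs p).map Prod.snd = p.tail := by
    apply List.map_snd_zip
    cases p <;> simp
  have h2 : ((pathArcs p).map Prod.snd).Nodup := by rw [this]; exact h.tail
  exact h2.of_map _

variable [DecidableEq V]

/-- net outflow of x in arc list l -/
def flux (l : List (V × V)) (x : V) : ℤ :=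
  (l.countP (fun a => a.1 = x) : ℤ) - (l.countP (fun a => a.2 = x) : ℤ)

theorem flux_nil (x : V) : flux ([] : List (V × V)) x = 0 := rfl

theorem flux_cons (a : V × V) (l : List (V × V)) (x : V) :
    flux (a :: l) x = flux l x + (if a.1 = x then 1 else 0) - (if a.2 = x then 1 else 0) := by
  simp [flux, List.countP_cons]
  split <;> split <;> simp <;> ring

theorem flux_append (l m : List (V × V)) (x : V) :
    flux (l ++ m) x = flux l x + flux m x := by
  simp [flux, List.countP_append]; ring

theorem flux_pathArcs : ∀ (p : List V) (u v x : V), p.head? = some u → p.getLast? = some v →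
    flux (pathArcs p) x = (if u = x then 1 else 0) - (if v = x then 1 else 0) := by
  intro p
  induction p with
  | nil => intro u v x h; simp at h
  | cons y l ih =>
    intro u v x hh hl
    simp at hh; subst hh
    cases l with
    | nil =>
      simp [List.getLast?] at hl
      subst hl; simp [pathArcs_single, flux_nil]
    | cons z l' =>
      rw [pathArcs_cons, flux_cons]
      have hl' : (z :: l').getLast? = some v := by
        rw [List.getLast?_cons_cons] at hl
        cases l' with
        | nil => simpa using hl
        | cons w l'' => simpa using hl
      rw [ih z v x rfl hl']
      simp
      ring

variable {S : Set V}

/-- a walk from inside S to outside S crosses -/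
theorem crossing (S : Set V) : ∀ (p : List V) (a b : V), p.head? = some a → p.getLast? = some b →
    a ∈ S → b ∉ S → ∃ e ∈ pathArcs p, e.1 ∈ S ∧ e.2 ∉ S := by
  intro p
  induction p with
  | nil => intro a b h; simp at h
  | cons x l ih =>
    intro a b hh hl ha hb
    simp at hh; subst hh
    cases l with
    | nil =>
      simp [List.getLast?] at hl; subst hl; exact absurd ha hb
    | cons z l' =>
      have hl' : (z :: l').getLast? = some b := by
        rw [List.getLast?_cons_cons] at hl; exact hl
      rw [pathArcs_cons]
      by_cases hz : z ∈ S
      · obtain ⟨e, he, h1, h2⟩ := ih z b rfl hl' hz hb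
        exact ⟨e, List.mem_cons_of_mem _ he, h1, h2⟩
      · exact ⟨(x, z), List.mem_cons_self, ha, hz⟩

theorem head_notin_all (S : Set V) : ∀ (p : List V),
    (∀ e ∈ pathArcs p, e.2 ∈ S → e.1 ∈ S) → ∀ a, p.head? = some a → a ∉ S →
    ∀ x ∈ p, x ∉ S := by
  intro p
  induction p with
  | nil => simp
  | cons y l ih =>
    intro hcl a hh ha x hx
    simp at hh; subst hh
    cases l with
    | nil => simp at hx; subst hx; exact ha
    | cons z l' =>
      rw [pathArcs_cons] at hcl
      rcases List.mem_cons.1 hx with h | h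
      · subst h; exact ha
      · have hz : z ∉ S := fun hzS => ha (hcl (y, z) (List.mem_cons_self) hzS)
        exact ih (fun e he => hcl e (List.mem_cons_of_mem _ he)) z rfl hz x h

theorem unique_crossing (S : Set V) : ∀ (p : List V),
    (∀ e ∈ pathArcs p, e.2 ∈ S → e.1 ∈ S) →
    ∀ e₁ e₂, e₁ ∈ pathArcs p → e₂ ∈ pathArcs p →
    e₁.1 ∈ S → e₁.2 ∉ S → e₂.1 ∈ S → e₂.2 ∉ S → e₁ = e₂ := by
  intro p
  induction p with
  | nil => intro _ e₁ e₂ h; simp [pathArcs] at h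
  | cons y l ih =>
    intro hcl e₁ e₂ h1 h2 h11 h12 h21 h22
    cases l with
    | nil => simp [pathArcs] at h1
    | cons z l' =>
      rw [pathArcs_cons] at hcl h1 h2
      have hcl' : ∀ e ∈ pathArcs (z :: l'), e.2 ∈ S → e.1 ∈ S :=
        fun e he => hcl e (List.mem_cons_of_mem _ he)
      have hno : z ∉ S → ∀ e ∈ pathArcs (z :: l'), e.1 ∉ S := fun hz e he =>
        head_notin_all S (z :: l') hcl' z rfl hz e.1 (mem_of_mem_pathArcs he).1
      rcases List.mem_cons.1 h1 with g1 | g1 <;> rcases List.mem_cons.1 h2 with g2 | g2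
      · rw [g1, g2]
      · subst g1
        exact absurd h21 (hno h12 e₂ g2)
      · subst g2
        exact absurd h11 (hno h22 e₁ g1)
      · exact ih hcl' e₁ e₂ g1 g2 h11 h12 h21 h22

omit [DecidableEq V] in
theorem pathArcs_suffix : ∀ (p l : List V), l <:+ p → ∀ a ∈ pathArcs l, a ∈ pathArcs p := by
  intro p
  induction p with
  | nil => intro l hl a ha
           rw [List.suffix_nil.1 hl] at ha; simp [pathArcs] at ha
  | cons y m ih =>
    intro l hl a ha
    rcases List.suffix_cons_iff.1 hl with h | h
    · rw [← h]; exact ha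
    · have : a ∈ pathArcs m := ih l h a ha
      cases m with
      | nil => simp [pathArcs] at this
      | cons z l' => exact List.mem_cons_of_mem _ this

omit [DecidableEq V] in
theorem getLast?_suffix {p l : List V} (h : l <:+ p) (hne : l ≠ []) :
    l.getLast? = p.getLast? := by
  obtain ⟨c, rfl⟩ := h
  rw [List.getLast?_append]
  cases hl : l.getLast? with
  | none => exact absurd (List.getLast?_eq_none_iff.1 hl) hne
  | some w => simp

omit [DecidableEq V] in
/-- walk-to-path: from any chain walk extract a nodup path with the same ends,
vertices and arcs among those of the walk. -/
theorem walk_to_path (A : V → V → Prop) : ∀ (n : ℕ) (p : List V) (u v : V), p.length ≤ n →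
    p.head? = some u → p.getLast? = some v → p.Chain' A →
    ∃ q : List V, q.head? = some u ∧ q.getLast? = some v ∧ q.Nodup ∧ q.Chain' A ∧
      (∀ x ∈ q, x ∈ p) ∧ (∀ a ∈ pathArcs q, a ∈ pathArcs p) := by
  intro n
  induction n with
  | zero =>
    intro p u v hn hh
    rw [List.eq_nil_of_length_eq_zero (Nat.le_zero.1 hn)] at hh
    simp at hh
  | succ n ih =>
    intro p u v hn hh hl hc
    cases p with
    | nil => simp at hh
    | cons x rest =>
      simp at hh; subst hh
      by_cases hx : x ∈ rest
      · -- drop to an occurrence of x in rest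
        obtain ⟨r1, r2, hr⟩ := List.append_of_mem hx
        have hsuf : (x :: r2) <:+ (x :: rest) := by
          rw [hr]
          exact ⟨x :: r1, by simp⟩
        have hlen : (x :: r2).length ≤ n := by
          simp [hr] at hn; simp; omega
        have hl' : (x :: r2).getLast? = some v := by
          rw [getLast?_suffix hsuf (by simp)]; exact hl
        obtain ⟨q, q1, q2, q3, q4, q5, q6⟩ :=
          ih (x :: r2) x v hlen rfl hl' (hc.suffix hsuf)
        refine ⟨q, q1, q2, q3, q4, fun y hy => ?_, fun a ha => ?_⟩
        · have : y ∈ x :: r2 := q5 y hy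
          rw [hr]; rcases List.mem_cons.1 this with h | h
          · simp [h]
          · simp [h]
        · exact pathArcs_suffix _ _ hsuf a (q6 a ha)
      · cases rest with
        | nil =>
          refine ⟨[x], rfl, ?_, by simp, List.isChain_singleton _, by simp, by simp [pathArcs]⟩
          simpa using hl
        | cons z rest' =>
          have hl' : (z :: rest').getLast? = some v := by
            rw [List.getLast?_cons_cons] at hl; exact hl
          have hlen : (z :: rest').length ≤ n := by simp at hn ⊢; omega
          obtain ⟨q, q1, q2, q3, q4, q5, q6⟩ :=
            ih (z :: rest') z v hlen rfl hl' (List.isChain_cons_cons.1 hc).2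
          refine ⟨x :: q, rfl, ?_, ?_, ?_, ?_, ?_⟩
          · cases q with
            | nil => simp at q1
            | cons w q' => simpa using q2
          · exact List.nodup_cons.2 ⟨fun hxq => hx (q5 x hxq), q3⟩
          · refine List.isChain_cons.2 ⟨fun y hy => ?_, q4⟩
            rw [q1] at hy; simp at hy; subst hy
            exact (List.isChain_cons_cons.1 hc).1
          · intro y hy
            rcases List.mem_cons.1 hy with h | h
            · simp [h]
            · exact List.mem_cons_of_mem _ (q5 y h)
          · intro a ha
            rw [pathArcs_cons' x q1] at ha
            rcases List.mem_cons.1 ha with h | h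
            · subst h; rw [pathArcs_cons]; simp
            · exact List.mem_cons_of_mem _ (q6 a h)

theorem extract (A : V → V → Prop) : ∀ (n : ℕ) (M : Multiset (V × V)), Multiset.card M ≤ n →
    (∀ a ∈ M, A a.1 a.2) → ∀ x : V,
    M.countP (fun a => a.2 = x) < M.countP (fun a => a.1 = x) →
    ∃ (y : V) (p : List V), p.head? = some x ∧ p.getLast? = some y ∧ p.Chain' A ∧
      (↑(pathArcs p) : Multiset (V × V)) ≤ M ∧
      M.countP (fun a => a.1 = y) < M.countP (fun a => a.2 = y) := by
  intro n
  induction n with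
  | zero =>
    intro M hM _ x hx
    rw [Multiset.card_eq_zero.1 (Nat.le_zero.1 hM)] at hx
    simp at hx
  | succ n ih =>
    intro M hM hA x hx
    have hpos : 0 < M.countP (fun a => a.1 = x) := Nat.lt_of_le_of_lt (Nat.zero_le _) hx
    obtain ⟨a, haM, hax⟩ := Multiset.countP_pos.1 hpos
    have ha : a = (x, a.2) := Prod.ext hax rfl
    set z := a.2 with hz0
    rw [ha] at haM
    obtain ⟨M', hM'⟩ := Multiset.exists_cons_of_mem haM
    subst hM'
    have eo : ∀ w, ((x, z) ::ₘ M').countP (fun b => b.1 = w)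
        = M'.countP (fun b => b.1 = w) + (if x = w then 1 else 0) := by
      intro w; rw [Multiset.countP_cons]
    have ei : ∀ w, ((x, z) ::ₘ M').countP (fun b => b.2 = w)
        = M'.countP (fun b => b.2 = w) + (if z = w then 1 else 0) := by
      intro w; rw [Multiset.countP_cons]
    have hAxz : A x z := hA (x, z) (Multiset.mem_cons_self _ _)
    by_cases hz : ((x, z) ::ₘ M').countP (fun b => b.1 = z)
        < ((x, z) ::ₘ M').countP (fun b => b.2 = z)
    · refine ⟨z, [x, z], rfl, rfl, ?_, ?_, hz⟩
      · exact List.isChain_cons_cons.2 ⟨hAxz, List.isChain_singleton _⟩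
      · have : pathArcs [x, z] = [(x, z)] := rfl
        rw [this]
        simpa using haM
    · -- recurse in M' at z
      push_neg at hz
      have o1 : ((x, z) ::ₘ M').countP (fun b => b.1 = z)
          = M'.countP (fun b => b.1 = z) + (if x = z then 1 else 0) := eo z
      have i1 : ((x, z) ::ₘ M').countP (fun b => b.2 = z)
          = M'.countP (fun b => b.2 = z) + 1 := by rw [ei z, if_pos rfl]
      have o2 : ((x, z) ::ₘ M').countP (fun b => b.1 = x)
          = M'.countP (fun b => b.1 = x) + 1 := by rw [eo x, if_pos rfl]
      have i2 : ((x, z) ::ₘ M').countP (fun b => b.2 = x)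
          = M'.countP (fun b => b.2 = x) + (if z = x then 1 else 0) := ei x
      have hz' : M'.countP (fun b => b.2 = z) < M'.countP (fun b => b.1 = z) := by
        by_cases hxz : x = z
        · rw [if_pos hxz] at o1
          have exz : M'.countP (fun b => b.1 = x) = M'.countP (fun b => b.1 = z) := by rw [hxz]
          have exz2 : M'.countP (fun b => b.2 = x) = M'.countP (fun b => b.2 = z) := by rw [hxz]
          have exz3 : ((x, z) ::ₘ M').countP (fun b => b.1 = x) = ((x, z) ::ₘ M').countP (fun b => b.1 = z) := by rw [hxz]
          have exz4 : ((x, z) ::ₘ M').countP (fun b => b.2 = x) = ((x, z) ::ₘ M').countP (fun b => b.2 = z) := by rw [hxz]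
          omega
        · rw [if_neg hxz] at o1
          omega
      have hcard : Multiset.card M' ≤ n := by
        rw [Multiset.card_cons] at hM; omega
      have hA' : ∀ a ∈ M', A a.1 a.2 := fun a ha => hA a (Multiset.mem_cons_of_mem ha)
      obtain ⟨y, p', q1, q2, q3, q4, q5⟩ := ih M' hcard hA' z hz'
      have oy : ((x, z) ::ₘ M').countP (fun b => b.1 = y)
          = M'.countP (fun b => b.1 = y) + (if x = y then 1 else 0) := eo y
      have iy : ((x, z) ::ₘ M').countP (fun b => b.2 = y)
          = M'.countP (fun b => b.2 = y) + (if z = y then 1 else 0) := ei y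
      have hyx : y ≠ x := by
        intro h
        rw [h] at q5
        by_cases hzy : z = x
        · rw [if_pos hzy] at i2; omega
        · rw [if_neg hzy] at i2; omega
      refine ⟨y, x :: p', rfl, ?_, ?_, ?_, ?_⟩
      · cases p' with
        | nil => simp at q1
        | cons w l => rw [List.getLast?_cons_cons]; exact q2
      · refine List.isChain_cons.2 ⟨fun w hw => ?_, q3⟩
        rw [q1] at hw; simp at hw; subst hw; exact hAxz
      · rw [pathArcs_cons' x q1]
        have hcoe : (↑((x, z) :: pathArcs p') : Multiset (V × V)) = (x, z) ::ₘ ↑(pathArcs p') := rfl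
        rw [hcoe]
        exact Multiset.cons_le_cons _ q4
      · rw [oy, iy, if_neg (fun h => hyx h.symm)]
        by_cases hzy : z = y
        · rw [if_pos hzy]; omega
        · rw [if_neg hzy]; omega

omit [DecidableEq V] in
theorem glue {A : V → V → Prop} {p q : List V} {u w v : V} (hph : p.head? = some u)
    (hpl : p.getLast? = some w) (hqh : q.head? = some w) (hql : q.getLast? = some v)
    (hpc : p.Chain' A) (hqc : q.Chain' A) :
    ∃ r : List V, r.head? = some u ∧ r.getLast? = some v ∧ r.Chain' A := by
  cases q with
  | nil => simp at hqh
  | cons w0 qt =>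
    simp at hqh; subst hqh
    cases qt with
    | nil =>
      simp [List.getLast?] at hql; subst hql
      exact ⟨p, hph, hpl, hpc⟩
    | cons z qt' =>
      refine ⟨p ++ z :: qt', ?_, ?_, ?_⟩
      · rw [List.head?_append]
        cases p with
        | nil => simp at hph
        | cons _ _ => simpa using hph
      · rw [List.getLast?_append]
        rw [List.getLast?_cons_cons] at hql
        simp [hql]
      · refine List.IsChain.append hpc hqc.tail ?_
        intro x hx y hy
        rw [hpl] at hx; simp at hx; subst hx
        simp at hy; subst hy
        exact (List.isChain_cons_cons.1 hqc).1

theorem flux_partition (l : List (V × V)) (f : V × V → Bool) (x : V) :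
    flux l x = flux (l.filter f) x + flux (l.filter (fun a => !f a)) x := by
  induction l with
  | nil => simp [flux_nil]
  | cons a m ih =>
    by_cases hf : f a
    · simp [List.filter_cons, hf, flux_cons, ih]; ring
    · simp [List.filter_cons, hf, flux_cons, ih]; ring

theorem flux_map_swap (l : List (V × V)) (x : V) :
    flux (l.map Prod.swap) x = - flux l x := by
  simp only [flux, List.countP_map]
  have h1 : ((fun (a : V × V) => decide (a.1 = x)) ∘ Prod.swap) = fun a => decide (a.2 = x) := by
    funext a; simp [Prod.swap]
  have h2 : ((fun (a : V × V) => decide (a.2 = x)) ∘ Prod.swap) = fun a => decide (a.1 = x) := by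
    funext a; simp [Prod.swap]
  rw [h1, h2]; ring

end Aux

/-- If `s` and `t` each two-reach `v`, and there are arc-disjoint directed paths from
`u` to `s` and from `u` to `t`, then `u` two-reaches `v`. -/
theorem stmt_9 {V : Type*} [Fintype V] (A : V → V → Prop) (u s t v : V)
    (hs : TwoReaches A s v) (ht : TwoReaches A t v)
    (h : ∃ p q : List V, IsDipath A p u s ∧ IsDipath A q u t ∧
      ∀ a ∈ pathArcs p, a ∉ pathArcs q) :
    TwoReaches A u v := by
  classical
  obtain ⟨p0, q0, hp0, hq0, hpq0⟩ := h
  obtain ⟨s1, s2, hs1, hs2, hs12⟩ := hs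
  obtain ⟨t1, t2, ht1, ht2, ht12⟩ := ht
  by_cases huv : u = v
  · subst huv
    exact ⟨[u], [u], ⟨rfl, rfl, List.nodup_singleton u, List.isChain_singleton u⟩,
      ⟨rfl, rfl, List.nodup_singleton u, List.isChain_singleton u⟩,
      by simp [Aux.pathArcs_single]⟩
  obtain ⟨W0, hW0h, hW0l, hW0c⟩ :=
    Aux.glue hp0.1 hp0.2.1 hs1.1 hs1.2.1 hp0.2.2.2 hs1.2.2.2
  obtain ⟨P, hPh, hPl, hPnd, hPc, -, -⟩ :=
    Aux.walk_to_path A W0.length W0 u v le_rfl hW0h hW0l hW0c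
  set LP := pathArcs P with hLPdef
  set R : V → V → Prop := fun a b => (A a b ∧ (a, b) ∉ LP) ∨ (b, a) ∈ LP with hRdef
  set S : Set V := {x | Relation.ReflTransGen R u x} with hSdef
  have huS : u ∈ S := Relation.ReflTransGen.refl
  have hstep : ∀ a ∈ S, ∀ b, R a b → b ∈ S := fun a ha b hr => Relation.ReflTransGen.tail ha hr
  have hback : ∀ e ∈ LP, e.2 ∈ S → e.1 ∈ S := by
    intro e he h2
    exact hstep e.2 h2 e.1 (Or.inr (by rwa [Prod.mk.eta]))
  have hcrossP : ∀ e : V × V, A e.1 e.2 → e.1 ∈ S → e.2 ∉ S → e ∈ LP := by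
    intro e hA1 h1 h2
    by_contra hnot
    exact h2 (hstep e.1 h1 e.2 (Or.inl ⟨hA1, by rwa [Prod.mk.eta]⟩))
  have hvS : v ∈ S := by
    by_contra hv
    have hex : ∃ e₁ e₂ : V × V, e₁ ≠ e₂ ∧ (A e₁.1 e₁.2 ∧ e₁.1 ∈ S ∧ e₁.2 ∉ S)
        ∧ (A e₂.1 e₂.2 ∧ e₂.1 ∈ S ∧ e₂.2 ∉ S) := by
      by_cases hsS : s ∈ S
      · obtain ⟨e₁, he₁, c₁⟩ := Aux.crossing S s1 s v hs1.1 hs1.2.1 hsS hv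
        obtain ⟨e₂, he₂, c₂⟩ := Aux.crossing S s2 s v hs2.1 hs2.2.1 hsS hv
        exact ⟨e₁, e₂, fun hEq => hs12 e₁ he₁ (hEq ▸ he₂),
          ⟨Aux.arc_rel hs1.2.2.2 _ he₁, c₁⟩, ⟨Aux.arc_rel hs2.2.2.2 _ he₂, c₂⟩⟩
      · by_cases htS : t ∈ S
        · obtain ⟨e₁, he₁, c₁⟩ := Aux.crossing S t1 t v ht1.1 ht1.2.1 htS hv
          obtain ⟨e₂, he₂, c₂⟩ := Aux.crossing S t2 t v ht2.1 ht2.2.1 htS hv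
          exact ⟨e₁, e₂, fun hEq => ht12 e₁ he₁ (hEq ▸ he₂),
            ⟨Aux.arc_rel ht1.2.2.2 _ he₁, c₁⟩, ⟨Aux.arc_rel ht2.2.2.2 _ he₂, c₂⟩⟩
        · obtain ⟨e₁, he₁, c₁⟩ := Aux.crossing S p0 u s hp0.1 hp0.2.1 huS hsS
          obtain ⟨e₂, he₂, c₂⟩ := Aux.crossing S q0 u t hq0.1 hq0.2.1 huS htS
          exact ⟨e₁, e₂, fun hEq => hpq0 e₁ he₁ (hEq ▸ he₂),
            ⟨Aux.arc_rel hp0.2.2.2 _ he₁, c₁⟩, ⟨Aux.arc_rel hq0.2.2.2 _ he₂, c₂⟩⟩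
    obtain ⟨e₁, e₂, hne, ⟨a1, c11, c12⟩, ⟨a2, c21, c22⟩⟩ := hex
    exact hne (Aux.unique_crossing S P hback e₁ e₂ (hcrossP e₁ a1 c11 c12)
      (hcrossP e₂ a2 c21 c22) c11 c12 c21 c22)
  obtain ⟨l, hlc, hll⟩ := List.exists_isChain_cons_of_relationReflTransGen hvS
  have hwl : (u :: l).getLast? = some v := by
    rw [List.getLast?_eq_getLast (by simp)]
    exact congrArg some hll
  obtain ⟨Q, hQh, hQl, hQnd, hQc, -, -⟩ :=
    Aux.walk_to_path R (u :: l).length (u :: l) u v le_rfl rfl hwl hlc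
  set LQ := pathArcs Q with hLQdef
  have hLPnd : LP.Nodup := Aux.pathArcs_nodup hPnd
  have hLQnd : LQ.Nodup := Aux.pathArcs_nodup hQnd
  set f : V × V → Bool := fun a => decide ((a.2, a.1) ∈ LQ) with hfdef
  set g : V × V → Bool := fun a => decide ((a.2, a.1) ∈ LP) with hgdef
  set LPk := LP.filter (fun a => !f a) with hLPk
  set CP := LP.filter f with hCP
  set LQf := LQ.filter (fun a => !g a) with hLQf
  set CQ := LQ.filter g with hCQ
  set Ml : List (V × V) := LPk ++ LQf with hMl
  -- properties of LQf
  have hQfA : ∀ a ∈ LQf, A a.1 a.2 ∧ a ∉ LP := by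
    intro a ha
    obtain ⟨haQ, hag⟩ := List.mem_filter.1 ha
    have hr : R a.1 a.2 := Aux.arc_rel hQc a haQ
    have hag' : (a.2, a.1) ∉ LP := by simpa [hgdef] using hag
    rcases hr with ⟨h1, h2⟩ | h3
    · exact ⟨h1, by rwa [Prod.mk.eta] at h2⟩
    · exact absurd h3 hag'
  have hMA : ∀ a ∈ Ml, A a.1 a.2 := by
    intro a ha
    rcases List.mem_append.1 ha with h | h
    · exact Aux.arc_rel hPc a (List.mem_of_mem_filter h)
    · exact (hQfA a h).1
  have hMnd : Ml.Nodup := by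
    refine (hLPnd.filter _).append (hLQnd.filter _) ?_
    intro a ha hb
    exact (hQfA a hb).2 (List.mem_of_mem_filter ha)
  -- cancellation permutation
  have hperm : CP.Perm (CQ.map Prod.swap) := by
    rw [List.perm_ext_iff_of_nodup (hLPnd.filter _)
      ((hLQnd.filter _).map (fun a b => (Prod.swap_injective ·)))]
    intro a
    constructor
    · intro ha
      obtain ⟨h1, h2⟩ := List.mem_filter.1 ha
      have h2' : (a.2, a.1) ∈ LQ := by simpa [hfdef] using h2
      have h1' : (a.1, a.2) ∈ LP := by rwa [Prod.mk.eta]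
      refine List.mem_map.2 ⟨(a.2, a.1), List.mem_filter.2 ⟨h2', ?_⟩, Prod.mk.eta⟩
      simpa [hgdef] using h1'
    · intro ha
      obtain ⟨b, hb, hba⟩ := List.mem_map.1 ha
      obtain ⟨h1, h2⟩ := List.mem_filter.1 hb
      have h2' : (b.2, b.1) ∈ LP := by simpa [hgdef] using h2
      subst hba
      refine List.mem_filter.2 ⟨h2', ?_⟩
      have h1' : (b.1, b.2) ∈ LQ := by rwa [Prod.mk.eta]
      simpa [hfdef] using h1'
  have hCPCQ : ∀ w, Aux.flux CP w = - Aux.flux CQ w := by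
    intro w
    have h1 : Aux.flux CP w = Aux.flux (CQ.map Prod.swap) w := by
      unfold Aux.flux
      rw [hperm.countP_eq, hperm.countP_eq]
    rw [h1, Aux.flux_map_swap]
  have fluxLP : ∀ w, Aux.flux LP w = (if u = w then 1 else 0) - (if v = w then 1 else 0) :=
    fun w => Aux.flux_pathArcs P u v w hPh hPl
  have fluxLQ : ∀ w, Aux.flux LQ w = (if u = w then 1 else 0) - (if v = w then 1 else 0) :=
    fun w => Aux.flux_pathArcs Q u v w hQh hQl
  have key : ∀ w, Aux.flux Ml w = Aux.flux LP w + Aux.flux LQ w := by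
    intro w
    have h1 := Aux.flux_partition LP f w
    have h2 := Aux.flux_partition LQ g w
    have h3 := hCPCQ w
    rw [hMl, Aux.flux_append]
    rw [← hCP, ← hLPk] at h1
    rw [← hCQ, ← hLQf] at h2
    linarith
  -- pass to multisets and extract two walks
  set M : Multiset (V × V) := ↑Ml with hMdef
  have hMA' : ∀ a ∈ M, A a.1 a.2 := fun a ha => hMA a (Multiset.mem_coe.1 ha)
  have hflux : ∀ w : V, ((M.countP (fun a => a.1 = w) : ℕ) : ℤ) - (M.countP (fun a => a.2 = w) : ℕ)
      = (if u = w then 2 else 0) - (if v = w then 2 else 0) := by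
    intro w
    have hk := key w
    rw [fluxLP w, fluxLQ w] at hk
    unfold Aux.flux at hk
    rw [hMdef, Multiset.coe_countP, Multiset.coe_countP]
    by_cases h1 : u = w <;> by_cases h2 : v = w <;> simp [h1, h2] at hk ⊢ <;> omega
  have hcnt_u : M.countP (fun a => a.2 = u) < M.countP (fun a => a.1 = u) := by
    have hh := hflux u
    rw [if_pos rfl, if_neg (fun hx : v = u => huv hx.symm)] at hh
    omega
  obtain ⟨y1, W1, w1h, w1l, w1c, w1le, w1cnt⟩ :=
    Aux.extract A (Multiset.card M) M le_rfl hMA' u hcnt_u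
  have w1cnt' : M.countP (fun a => a.1 = y1) < M.countP (fun a => a.2 = y1) := w1cnt
  have cW1 : ∀ w : V, ((Multiset.countP (fun a => a.1 = w) (↑(pathArcs W1) : Multiset (V × V)) : ℕ) : ℤ)
      - (Multiset.countP (fun a => a.2 = w) (↑(pathArcs W1) : Multiset (V × V)) : ℕ)
      = (if u = w then 1 else 0) - (if y1 = w then 1 else 0) := by
    intro w
    rw [Multiset.coe_countP, Multiset.coe_countP]
    exact Aux.flux_pathArcs W1 u y1 w w1h w1l
  have hy1 : y1 = v := by
    by_contra hne
    have hh := hflux y1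
    rw [if_neg (fun hx : v = y1 => hne hx.symm)] at hh
    by_cases h1 : u = y1
    · rw [if_pos h1] at hh; omega
    · rw [if_neg h1] at hh; omega
  rw [hy1] at w1l cW1
  set N : Multiset (V × V) := M - ↑(pathArcs W1) with hNdef
  have hNle : N ≤ M := tsub_le_self
  have hNA : ∀ a ∈ N, A a.1 a.2 := fun a ha => hMA' a (Multiset.mem_of_le hNle ha)
  have hcnt_u2 : N.countP (fun a => a.2 = u) < N.countP (fun a => a.1 = u) := by
    have h1 := hflux u
    have h2 := cW1 u
    rw [if_pos rfl, if_neg (fun hx : v = u => huv hx.symm)] at h1 h2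
    have h3 : N.countP (fun a => a.2 = u) = M.countP (fun a => a.2 = u)
        - Multiset.countP (fun a => a.2 = u) (↑(pathArcs W1) : Multiset (V × V)) :=
      Multiset.countP_sub w1le _
    have h4 : N.countP (fun a => a.1 = u) = M.countP (fun a => a.1 = u)
        - Multiset.countP (fun a => a.1 = u) (↑(pathArcs W1) : Multiset (V × V)) :=
      Multiset.countP_sub w1le _
    have h5 : Multiset.countP (fun a => a.2 = u) (↑(pathArcs W1) : Multiset (V × V))
        ≤ M.countP (fun a => a.2 = u) := Multiset.countP_le_of_le _ w1le
    have h6 : Multiset.countP (fun a => a.1 = u) (↑(pathArcs W1) : Multiset (V × V))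
        ≤ M.countP (fun a => a.1 = u) := Multiset.countP_le_of_le _ w1le
    omega
  obtain ⟨y2, W2, w2h, w2l, w2c, w2le, w2cnt⟩ :=
    Aux.extract A (Multiset.card N) N le_rfl hNA u hcnt_u2
  have w2cnt' : N.countP (fun a => a.1 = y2) < N.countP (fun a => a.2 = y2) := w2cnt
  have hy2 : y2 = v := by
    by_contra hne
    have h1 := hflux y2
    have h2 := cW1 y2
    rw [if_neg (fun hx : v = y2 => hne hx.symm)] at h1 h2
    have h3 : N.countP (fun a => a.2 = y2) = M.countP (fun a => a.2 = y2)
        - Multiset.countP (fun a => a.2 = y2) (↑(pathArcs W1) : Multiset (V × V)) :=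
      Multiset.countP_sub w1le _
    have h4 : N.countP (fun a => a.1 = y2) = M.countP (fun a => a.1 = y2)
        - Multiset.countP (fun a => a.1 = y2) (↑(pathArcs W1) : Multiset (V × V)) :=
      Multiset.countP_sub w1le _
    have h5 : Multiset.countP (fun a => a.2 = y2) (↑(pathArcs W1) : Multiset (V × V))
        ≤ M.countP (fun a => a.2 = y2) := Multiset.countP_le_of_le _ w1le
    have h6 : Multiset.countP (fun a => a.1 = y2) (↑(pathArcs W1) : Multiset (V × V))
        ≤ M.countP (fun a => a.1 = y2) := Multiset.countP_le_of_le _ w1le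
    by_cases hu : u = y2
    · rw [if_pos hu] at h1 h2; omega
    · rw [if_neg hu] at h1 h2; omega
  rw [hy2] at w2l
  have hMnodupM : M.Nodup := by rw [hMdef]; exact Multiset.coe_nodup.2 hMnd
  have hdisj : ∀ a ∈ pathArcs W1, a ∉ pathArcs W2 := by
    intro a h1 h2
    have c1 : 1 ≤ Multiset.count a (↑(pathArcs W1) : Multiset (V × V)) :=
      Multiset.one_le_count_iff_mem.2 (Multiset.mem_coe.2 h1)
    have c2 : 1 ≤ Multiset.count a (↑(pathArcs W2) : Multiset (V × V)) :=
      Multiset.one_le_count_iff_mem.2 (Multiset.mem_coe.2 h2)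
    have d1 : Multiset.count a (↑(pathArcs W1) : Multiset (V × V)) ≤ Multiset.count a M :=
      Multiset.count_le_of_le a w1le
    have d2 : Multiset.count a (↑(pathArcs W2) : Multiset (V × V)) ≤ Multiset.count a N :=
      Multiset.count_le_of_le a w2le
    have d3 : Multiset.count a N = Multiset.count a M
        - Multiset.count a (↑(pathArcs W1) : Multiset (V × V)) := by
      rw [hNdef]; exact Multiset.count_sub a M _
    have d4 : Multiset.count a M ≤ 1 := Multiset.nodup_iff_count_le_one.1 hMnodupM a
    omega
  obtain ⟨P1, e1h, e1l, e1nd, e1c, -, e1arc⟩ :=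
    Aux.walk_to_path A W1.length W1 u v le_rfl w1h w1l w1c
  obtain ⟨P2, e2h, e2l, e2nd, e2c, -, e2arc⟩ :=
    Aux.walk_to_path A W2.length W2 u v le_rfl w2h w2l w2c
  exact ⟨P1, P2, ⟨e1h, e1l, e1nd, e1c⟩, ⟨e2h, e2l, e2nd, e2c⟩,
    fun a ha hb => hdisj a (e1arc a ha) (e2arc a hb)⟩
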